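/- arXiv:2202.08209 — 10 statements merged into one kernel-verified Lean document; each statement's English description precedes it below -/
import Mathlib

section
/- Let p : V → ℝ be a probabilistic model on the EPR scenario (p ≥ 0 and Σ_{a,b} p(a,b,x,y) = 1 for all (x,y)). Then p satisfies the no-disturbance (ND) condition if and only if Σ_{v ∈ e} p(v) = 1 for every Foulis–Randall edge e; equivalently, if and only if the sums Σ_{v ∈ e} p(v) over all Foulis–Randall edges e are all equal. -/
/-- The vertex set of the EPR (Bell/CHSH) contextuality scenario:
`(a, b, x, y)` records outcomes `a, b` of parties A, B under settings `x, y`. -/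
abbrev EPRVertex : Type := Fin 2 × Fin 2 × Fin 2 × Fin 2

/-- The Cartesian edge `e_{x,y} = {(a,b,x,y) : a,b}`. -/
def cartEdge (x y : Fin 2) : Finset EPRVertex :=
  Finset.univ.filter fun v => v.2.2.1 = x ∧ v.2.2.2 = y

/-- A→B measurement-protocol edge `E^{AB}_{x,f} = {(a,b,x,f a) : a,b}`. -/
def edgeAB (x : Fin 2) (f : Fin 2 → Fin 2) : Finset EPRVertex :=
  Finset.univ.filter fun v => v.2.2.1 = x ∧ v.2.2.2 = f v.1

/-- B→A measurement-protocol edge `E^{BA}_{y,g} = {(a,b,g b,y) : a,b}`. -/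
def edgeBA (y : Fin 2) (g : Fin 2 → Fin 2) : Finset EPRVertex :=
  Finset.univ.filter fun v => v.2.2.2 = y ∧ v.2.2.1 = g v.2.1

/-- The Foulis–Randall edges of the EPR scenario. -/
def FREdges : Finset (Finset EPRVertex) :=
  (Finset.univ.image fun xy : Fin 2 × Fin 2 => cartEdge xy.1 xy.2) ∪
  (Finset.univ.image fun xf : Fin 2 × (Fin 2 → Fin 2) => edgeAB xf.1 xf.2) ∪
  (Finset.univ.image fun yg : Fin 2 × (Fin 2 → Fin 2) => edgeBA yg.1 yg.2)

/-- `p` is a probabilistic model on the EPR scenario. -/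
def IsProbModel (p : EPRVertex → ℝ) : Prop :=
  (∀ v, 0 ≤ p v) ∧ ∀ x y : Fin 2, ∑ a : Fin 2, ∑ b : Fin 2, p (a, b, x, y) = 1

/-- The no-disturbance (ND) condition. -/
def IsND (p : EPRVertex → ℝ) : Prop :=
  (∀ a x : Fin 2, ∑ b : Fin 2, p (a, b, x, 0) = ∑ b : Fin 2, p (a, b, x, 1)) ∧
  (∀ b y : Fin 2, ∑ a : Fin 2, p (a, b, 0, y) = ∑ a : Fin 2, p (a, b, 1, y))

/-- Indicator function of a finite set of vertices. -/
def indicator (c : Finset EPRVertex) : EPRVertex → ℝ := fun v => if v ∈ c then 1 else 0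

/-- A deterministic model: one outcome in each Cartesian edge. -/
def IsDetModel (c : Finset EPRVertex) : Prop :=
  ∀ x y : Fin 2, (c ∩ cartEdge x y).card = 1

/-- The disturbance `D(c) = Σ_e ||c ∩ e| − 1|` over all Foulis–Randall edges. -/
def disturbance (c : Finset EPRVertex) : ℕ :=
  ∑ e ∈ FREdges, (((c ∩ e).card : ℤ) - 1).natAbs

/-- Correlation of `p` at settings `(x, y)`. -/
def corr (x y : Fin 2) (p : EPRVertex → ℝ) : ℝ :=
  ∑ a : Fin 2, ∑ b : Fin 2, (-1 : ℝ) ^ ((a : ℕ) + (b : ℕ)) * p (a, b, x, y)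

/-- The Bell parameter `B(p)`. -/
noncomputable def Bell (p : EPRVertex → ℝ) : ℝ :=
  Finset.univ.sup' Finset.univ_nonempty fun xy : Fin 2 × Fin 2 =>
    |(∑ x' : Fin 2, ∑ y' : Fin 2, corr x' y' p) - 2 * corr xy.1 xy.2 p|

section
variable {p : EPRVertex → ℝ}


lemma sum_cart' (p : EPRVertex → ℝ) (x y : Fin 2) :
    ∑ v ∈ cartEdge x y, p v = ∑ a : Fin 2, ∑ b : Fin 2, p (a, b, x, y) := by
  fin_cases x <;> fin_cases y <;>
    simp [cartEdge, Finset.sum_filter, Fintype.sum_prod_type]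

lemma sum_AB' (p : EPRVertex → ℝ) (x : Fin 2) (f : Fin 2 → Fin 2) :
    ∑ v ∈ edgeAB x f, p v = ∑ a : Fin 2, ∑ b : Fin 2, p (a, b, x, f a) := by
  have h0 : f 0 = 0 ∨ f 0 = 1 := by omega
  have h1 : f 1 = 0 ∨ f 1 = 1 := by omega
  fin_cases x <;> rcases h0 with h0 | h0 <;> rcases h1 with h1 | h1 <;>
    simp [edgeAB, Finset.sum_filter, Fintype.sum_prod_type, h0, h1]

lemma sum_BA' (p : EPRVertex → ℝ) (y : Fin 2) (g : Fin 2 → Fin 2) :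
    ∑ v ∈ edgeBA y g, p v = ∑ a : Fin 2, ∑ b : Fin 2, p (a, b, g b, y) := by
  have h0 : g 0 = 0 ∨ g 0 = 1 := by omega
  have h1 : g 1 = 0 ∨ g 1 = 1 := by omega
  fin_cases y <;> rcases h0 with h0 | h0 <;> rcases h1 with h1 | h1 <;>
    simp [edgeBA, Finset.sum_filter, Fintype.sum_prod_type, h0, h1]

lemma mem_FREdges {e : Finset EPRVertex} :
    e ∈ FREdges ↔ (∃ x y : Fin 2, e = cartEdge x y) ∨
      (∃ x f, e = edgeAB x f) ∨ (∃ y g, e = edgeBA y g) := by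
  simp [FREdges, eq_comm, Prod.exists]

lemma nd_one (hp : IsProbModel p) (hnd : IsND p) :
    ∀ e ∈ FREdges, ∑ v ∈ e, p v = 1 := by
  intro e he
  rcases mem_FREdges.mp he with ⟨x, y, rfl⟩ | ⟨x, f, rfl⟩ | ⟨y, g, rfl⟩
  · rw [sum_cart']; exact hp.2 x y
  · rw [sum_AB']
    have : ∀ a : Fin 2, ∑ b : Fin 2, p (a, b, x, f a) = ∑ b : Fin 2, p (a, b, x, 0) := by
      intro a
      rcases (show f a = 0 ∨ f a = 1 by omega) with h | h
      · rw [h]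
      · rw [h]; exact (hnd.1 a x).symm
    rw [Finset.sum_congr rfl fun a _ => this a]; exact hp.2 x 0
  · rw [sum_BA']
    have : ∀ b : Fin 2, ∑ a : Fin 2, p (a, b, g b, y) = ∑ a : Fin 2, p (a, b, 0, y) := by
      intro b
      rcases (show g b = 0 ∨ g b = 1 by omega) with h | h
      · rw [h]
      · rw [h]; exact (hnd.2 b y).symm
    rw [Finset.sum_comm, Finset.sum_congr rfl fun b _ => this b, ← Finset.sum_comm]
    exact hp.2 0 y

lemma one_nd (hp : IsProbModel p) (h1 : ∀ e ∈ FREdges, ∑ v ∈ e, p v = 1) : IsND p := by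
  constructor
  · intro a x
    have hf : ∀ f : Fin 2 → Fin 2, ∑ a' : Fin 2, ∑ b : Fin 2, p (a', b, x, f a') = 1 := by
      intro f
      rw [← sum_AB']
      exact h1 _ (mem_FREdges.mpr (Or.inr (Or.inl ⟨x, f, rfl⟩)))
    have hA := hf (fun i => if i = a then 0 else 0)
    have hB := hf (fun i => if i = a then 1 else 0)
    fin_cases a <;> simp [Fin.sum_univ_two] at hA hB ⊢ <;> linarith
  · intro b y
    have hg : ∀ g : Fin 2 → Fin 2, ∑ a : Fin 2, ∑ b' : Fin 2, p (a, b', g b', y) = 1 := by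
      intro g
      rw [← sum_BA']
      exact h1 _ (mem_FREdges.mpr (Or.inr (Or.inr ⟨y, g, rfl⟩)))
    have hA := hg (fun i => if i = b then 0 else 0)
    have hB := hg (fun i => if i = b then 1 else 0)
    fin_cases b <;> simp [Fin.sum_univ_two] at hA hB ⊢ <;> linarith

/-- for a probabilistic model `p` on the EPR scenario, the ND condition
holds iff every Foulis–Randall edge sums to 1, and equivalently iff the sums over all
Foulis–Randall edges are all equal. -/
theorem nd_iff_fr_edges_sum_one (p : EPRVertex → ℝ) (hp : IsProbModel p) :
    (IsND p ↔ ∀ e ∈ FREdges, ∑ v ∈ e, p v = 1) ∧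
    (IsND p ↔ ∀ e ∈ FREdges, ∀ e' ∈ FREdges, ∑ v ∈ e, p v = ∑ v ∈ e', p v) := by

  have h1 : IsND p ↔ ∀ e ∈ FREdges, ∑ v ∈ e, p v = 1 :=
    ⟨nd_one hp, one_nd hp⟩
  refine ⟨h1, h1.trans ⟨fun h e he e' he' => by rw [h e he, h e' he'], fun h e he => ?_⟩⟩
  have hc : cartEdge 0 0 ∈ FREdges := mem_FREdges.mpr (Or.inl ⟨0, 0, rfl⟩)
  rw [h e he (cartEdge 0 0) hc, sum_cart']
  exact hp.2 0 0

end
end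

section
/- Let c be a deterministic model on the EPR scenario. The following are equivalent: (i) c satisfies the no-disturbance (ND) condition; (ii) |c ∩ e| = 1 for every Foulis–Randall edge e; (iii) the disturbance D(c) = Σ_e ||c ∩ e| − 1| (summed over all Foulis–Randall edges e) equals 0. -/
-- tiny decidable lemmas
lemma D1 : ∀ A : Fin 2 → Fin 2 → Fin 2,
    ((∀ x, A x 0 = A x 1) ↔
      ∀ (x : Fin 2) (f : Fin 2 → Fin 2),
        (Finset.univ.filter fun y => f (A x y) = y).card = 1) := by decide

lemma D2 : ∀ B : Fin 2 → Fin 2 → Fin 2,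
    ((∀ y, B 0 y = B 1 y) ↔
      ∀ (y : Fin 2) (g : Fin 2 → Fin 2),
        (Finset.univ.filter fun x => g (B x y) = x).card = 1) := by decide

lemma sum_ite_and_left (P : Prop) [Decidable P] (t : Fin 2) :
    (if P ∧ (0 : Fin 2) = t then (1:ℝ) else 0) + (if P ∧ (1 : Fin 2) = t then 1 else 0)
      = if P then 1 else 0 := by
  by_cases h : P <;> fin_cases t <;> simp [h]

lemma sum_ite_and_right (P : Prop) [Decidable P] (s : Fin 2) :
    (if (0 : Fin 2) = s ∧ P then (1:ℝ) else 0) + (if (1 : Fin 2) = s ∧ P then 1 else 0)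
      = if P then 1 else 0 := by
  by_cases h : P <;> fin_cases s <;> simp [h]

lemma onehot (s t : Fin 2) :
    (∀ a : Fin 2, (if a = s then (1:ℝ) else 0) = if a = t then 1 else 0) ↔ s = t := by
  constructor
  · intro h
    by_contra hne
    have := h s
    simp [hne] at this
  · rintro rfl _; rfl

/-- for a deterministic model `c`, ND holds iff every Foulis–Randall edge
meets `c` in exactly one vertex, iff the disturbance `D(c)` is zero. -/
theorem detModel_nd_iff_fr_card_one_iff_disturbance_zero
    (c : Finset EPRVertex) (hc : IsDetModel c) :
    (IsND (indicator c) ↔ ∀ e ∈ FREdges, (c ∩ e).card = 1) ∧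
    (IsND (indicator c) ↔ disturbance c = 0) := by
  -- extract the unique vertex in each cartesian edge
  have h1 : ∀ x y : Fin 2, ∃ w, c ∩ cartEdge x y = {w} := by
    intro x y; exact Finset.card_eq_one.mp (hc x y)
  choose v hv using h1
  set A : Fin 2 → Fin 2 → Fin 2 := fun x y => (v x y).1 with hA
  set B : Fin 2 → Fin 2 → Fin 2 := fun x y => (v x y).2.1 with hB
  have hvmem : ∀ x y, v x y ∈ c ∩ cartEdge x y := by
    intro x y; rw [hv]; exact Finset.mem_singleton_self _
  have hveq : ∀ x y, v x y = (A x y, B x y, x, y) := by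
    intro x y
    have h := hvmem x y
    rw [Finset.mem_inter] at h
    have h2 := h.2
    simp only [cartEdge, Finset.mem_filter] at h2
    exact Prod.ext_iff.mpr ⟨rfl, Prod.ext_iff.mpr ⟨rfl, Prod.ext_iff.mpr ⟨h2.2.1, h2.2.2⟩⟩⟩
  have hmem : ∀ w : EPRVertex, w ∈ c ↔ w = v w.2.2.1 w.2.2.2 := by
    intro w
    constructor
    · intro hw
      have : w ∈ c ∩ cartEdge w.2.2.1 w.2.2.2 := by
        rw [Finset.mem_inter]
        exact ⟨hw, by simp [cartEdge]⟩
      rw [hv] at this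
      exact Finset.mem_singleton.mp this
    · intro hw; rw [hw]; exact (Finset.mem_inter.mp (hvmem _ _)).1
  -- membership in coordinates
  have hmem' : ∀ a b x y : Fin 2, ((a,b,x,y) : EPRVertex) ∈ c ↔ a = A x y ∧ b = B x y := by
    intro a b x y
    rw [hmem]
    simp only []
    rw [hveq]
    constructor
    · intro h; rw [Prod.ext_iff] at h; exact ⟨h.1, (Prod.ext_iff.mp h.2).1⟩
    · rintro ⟨rfl, rfl⟩; rfl
  -- ND characterization
  have hND : IsND (indicator c) ↔ ((∀ x, A x 0 = A x 1) ∧ (∀ y, B 0 y = B 1 y)) := by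
    unfold IsND indicator
    simp only [Fin.sum_univ_two]
    constructor
    · rintro ⟨hnd1, hnd2⟩
      constructor
      · intro x
        rw [← onehot (A x 0) (A x 1)]
        intro a
        have := hnd1 a x
        simp only [hmem'] at this
        rwa [sum_ite_and_left (a = A x 0) (B x 0), sum_ite_and_left (a = A x 1) (B x 1)] at this
      · intro y
        rw [← onehot (B 0 y) (B 1 y)]
        intro b
        have := hnd2 b y
        simp only [hmem'] at this
        rwa [sum_ite_and_right (b = B 0 y) (A 0 y), sum_ite_and_right (b = B 1 y) (A 1 y)] at this
    · rintro ⟨ha, hb⟩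
      constructor
      · intro a x
        simp only [hmem']
        rw [sum_ite_and_left (a = A x 0) (B x 0), sum_ite_and_left (a = A x 1) (B x 1), ha x]
      · intro b y
        simp only [hmem']
        rw [sum_ite_and_right (b = B 0 y) (A 0 y), sum_ite_and_right (b = B 1 y) (A 1 y), hb y]
  -- card of intersections with protocol edges
  have hAB : ∀ (x : Fin 2) (f : Fin 2 → Fin 2),
      c ∩ edgeAB x f = (Finset.univ.filter fun y => f (A x y) = y).image (fun y => v x y) := by
    intro x f
    ext w
    simp only [Finset.mem_inter, edgeAB, Finset.mem_filter, Finset.mem_image, Finset.mem_univ,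
      true_and]
    constructor
    · rintro ⟨hw, hx, hy⟩
      refine ⟨w.2.2.2, ?_, ?_⟩
      · rw [hmem] at hw
        have h1 : w.1 = A w.2.2.1 w.2.2.2 := by rw [hw, hveq]
        rw [← hx, ← h1, ← hy]
      · rw [hmem] at hw
        rw [← hx]; exact hw.symm
    · rintro ⟨y, hy, rfl⟩
      refine ⟨(Finset.mem_inter.mp (hvmem x y)).1, ?_, ?_⟩
      · rw [hveq]
      · rw [hveq]; simpa [hveq] using hy.symm
  have hBA : ∀ (y : Fin 2) (g : Fin 2 → Fin 2),
      c ∩ edgeBA y g = (Finset.univ.filter fun x => g (B x y) = x).image (fun x => v x y) := by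
    intro y g
    ext w
    simp only [Finset.mem_inter, edgeBA, Finset.mem_filter, Finset.mem_image, Finset.mem_univ,
      true_and]
    constructor
    · rintro ⟨hw, hy, hx⟩
      refine ⟨w.2.2.1, ?_, ?_⟩
      · rw [hmem] at hw
        have h1 : w.2.1 = B w.2.2.1 w.2.2.2 := by rw [hw, hveq]
        rw [← hy, ← h1, ← hx]
      · rw [hmem] at hw
        rw [← hy]; exact hw.symm
    · rintro ⟨x, hx, rfl⟩
      refine ⟨(Finset.mem_inter.mp (hvmem x y)).1, ?_, ?_⟩
      · rw [hveq]
      · rw [hveq]; simpa [hveq] using hx.symm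
  have hABcard : ∀ (x : Fin 2) (f : Fin 2 → Fin 2),
      (c ∩ edgeAB x f).card = (Finset.univ.filter fun y => f (A x y) = y).card := by
    intro x f
    rw [hAB]
    apply Finset.card_image_of_injective
    intro y1 y2 h
    have h' : (v x y1).2.2.2 = (v x y2).2.2.2 := congrArg (fun w : EPRVertex => w.2.2.2) h
    rwa [hveq, hveq] at h'
  have hBAcard : ∀ (y : Fin 2) (g : Fin 2 → Fin 2),
      (c ∩ edgeBA y g).card = (Finset.univ.filter fun x => g (B x y) = x).card := by
    intro y g
    rw [hBA]
    apply Finset.card_image_of_injective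
    intro x1 x2 h
    have h' : (v x1 y).2.2.1 = (v x2 y).2.2.1 := congrArg (fun w : EPRVertex => w.2.2.1) h
    rwa [hveq, hveq] at h'
  -- the main iff with FR edges
  have hFR : IsND (indicator c) ↔ ∀ e ∈ FREdges, (c ∩ e).card = 1 := by
    rw [hND]
    constructor
    · rintro ⟨ha, hb⟩ e he
      simp only [FREdges, Finset.mem_union, Finset.mem_image, Finset.mem_univ, true_and] at he
      rcases he with (⟨xy, rfl⟩ | ⟨xf, rfl⟩) | ⟨yg, rfl⟩
      · exact hc xy.1 xy.2
      · rw [hABcard]; exact (D1 A).mp ha xf.1 xf.2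
      · rw [hBAcard]; exact (D2 B).mp hb yg.1 yg.2
    · intro h
      constructor
      · rw [D1 A]
        intro x f
        rw [← hABcard]
        apply h
        simp only [FREdges, Finset.mem_union, Finset.mem_image, Finset.mem_univ, true_and]
        exact Or.inl (Or.inr ⟨(x, f), rfl⟩)
      · rw [D2 B]
        intro y g
        rw [← hBAcard]
        apply h
        simp only [FREdges, Finset.mem_union, Finset.mem_image, Finset.mem_univ, true_and]
        exact Or.inr ⟨(y, g), rfl⟩
  refine ⟨hFR, ?_⟩
  rw [hFR]
  unfold disturbance
  rw [Finset.sum_eq_zero_iff]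
  apply forall_congr'
  intro e
  apply imp_congr Iff.rfl
  constructor
  · intro h; omega
  · intro h; omega
end

section
/- A deterministic model c on the EPR scenario satisfies the no-disturbance (ND) condition if and only if it is local deterministic, i.e., there exist functions ε : Fin 2 → Fin 2 and δ : Fin 2 → Fin 2 such that c = {(ε x, δ y, x, y) : x, y ∈ Fin 2}. -/
/-- a deterministic model on the EPR scenario satisfies the ND condition
iff it is local deterministic, i.e. `c = {(ε x, δ y, x, y) : x, y}` for some `ε, δ`. -/
theorem detModel_nd_iff_localDeterministic (c : Finset EPRVertex) (hc : IsDetModel c) :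
    IsND (indicator c) ↔ ∃ ε δ : Fin 2 → Fin 2,
      c = Finset.univ.image fun xy : Fin 2 × Fin 2 => (ε xy.1, δ xy.2, xy.1, xy.2) := by
  have hsing : ∀ x y : Fin 2, ∃ ab : Fin 2 × Fin 2,
      c ∩ cartEdge x y = {(ab.1, ab.2, x, y)} := by
    intro x y
    obtain ⟨v, hv⟩ := Finset.card_eq_one.mp (hc x y)
    have hvmem : v ∈ c ∩ cartEdge x y := hv ▸ Finset.mem_singleton_self v
    have hco := (Finset.mem_inter.mp hvmem).2
    simp only [cartEdge, Finset.mem_filter, Finset.mem_univ, true_and] at hco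
    refine ⟨(v.1, v.2.1), ?_⟩
    rw [hv]
    obtain ⟨h1, h2⟩ := hco
    rw [← h1, ← h2]
  choose ab hab using hsing
  have hmem : ∀ v : EPRVertex, v ∈ c ↔
      v = ((ab v.2.2.1 v.2.2.2).1, (ab v.2.2.1 v.2.2.2).2, v.2.2.1, v.2.2.2) := by
    intro v
    constructor
    · intro hv
      have : v ∈ c ∩ cartEdge v.2.2.1 v.2.2.2 := by
        refine Finset.mem_inter.mpr ⟨hv, ?_⟩
        simp [cartEdge]
      rw [hab] at this
      exact Finset.mem_singleton.mp this
    · intro hv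
      have : ((ab v.2.2.1 v.2.2.2).1, (ab v.2.2.1 v.2.2.2).2, v.2.2.1, v.2.2.2)
          ∈ c ∩ cartEdge v.2.2.1 v.2.2.2 := by
        rw [hab]; exact Finset.mem_singleton_self _
      rw [hv]
      exact (Finset.mem_inter.mp this).1
  have hval : ∀ a b x y : Fin 2, indicator c (a, b, x, y) =
      (if a = (ab x y).1 then (1:ℝ) else 0) * (if b = (ab x y).2 then 1 else 0) := by
    intro a b x y
    simp only [indicator, hmem (a, b, x, y), Prod.mk.injEq]
    by_cases h1 : a = (ab x y).1 <;> by_cases h2 : b = (ab x y).2 <;> simp [h1, h2]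
  have hsumB : ∀ a x y : Fin 2, ∑ b : Fin 2, indicator c (a, b, x, y) =
      (if a = (ab x y).1 then (1:ℝ) else 0) := by
    intro a x y
    simp only [hval, ← Finset.mul_sum]
    rw [Finset.sum_ite_eq' Finset.univ ((ab x y).2) (fun _ => (1:ℝ))]
    simp
  have hsumA : ∀ b x y : Fin 2, ∑ a : Fin 2, indicator c (a, b, x, y) =
      (if b = (ab x y).2 then (1:ℝ) else 0) := by
    intro b x y
    simp only [hval, ← Finset.sum_mul]
    rw [Finset.sum_ite_eq' Finset.univ ((ab x y).1) (fun _ => (1:ℝ))]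
    simp
  constructor
  · rintro ⟨hND1, hND2⟩
    have hA : ∀ x : Fin 2, (ab x 0).1 = (ab x 1).1 := by
      intro x
      have h := hND1 (ab x 0).1 x
      rw [hsumB, hsumB, if_pos rfl] at h
      by_contra hne
      rw [if_neg fun h' => hne h'] at h
      norm_num at h
    have hB : ∀ y : Fin 2, (ab 0 y).2 = (ab 1 y).2 := by
      intro y
      have h := hND2 (ab 0 y).2 y
      rw [hsumA, hsumA, if_pos rfl] at h
      by_contra hne
      rw [if_neg fun h' => hne h'] at h
      norm_num at h
    refine ⟨fun x => (ab x 0).1, fun y => (ab 0 y).2, ?_⟩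
    have hab' : ∀ x y : Fin 2, ab x y = ((ab x 0).1, (ab 0 y).2) := by
      intro x y
      fin_cases x <;> fin_cases y <;>
        exact Prod.ext (by simp [hA]) (by simp [hB])
    ext v
    constructor
    · intro hv
      rw [hmem v] at hv
      refine Finset.mem_image.mpr ⟨(v.2.2.1, v.2.2.2), Finset.mem_univ _, ?_⟩
      rw [hv, hab' v.2.2.1 v.2.2.2]
    · intro hv
      obtain ⟨⟨x, y⟩, _, hxy⟩ := Finset.mem_image.mp hv
      rw [hmem v, ← hxy]
      simp only []
      rw [hab' x y]
  · rintro ⟨ε, δ, hcim⟩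
    have habε : ∀ x y : Fin 2, ab x y = (ε x, δ y) := by
      intro x y
      have h1 : (ε x, δ y, x, y) ∈ c := by
        rw [hcim]
        exact Finset.mem_image.mpr ⟨(x, y), Finset.mem_univ _, rfl⟩
      have := (hmem (ε x, δ y, x, y)).mp h1
      simp only [Prod.mk.injEq] at this
      exact Prod.ext this.1.symm this.2.1.symm
    constructor
    · intro a x
      rw [hsumB, hsumB, habε, habε]
    · intro b y
      rw [hsumA, hsumA, habε, habε]
end

section
/- Consider the non-orthogonality graph of the Foulis–Randall product of the EPR scenario: the simple graph on V = Fin 2 × Fin 2 × Fin 2 × Fin 2 in which distinct u, v are adjacent exactly when no Foulis–Randall edge contains both. Its maximal cliques are exactly the 16 local deterministic models {(ε x, δ y, x, y) : x, y ∈ Fin 2} for functions ε, δ : Fin 2 → Fin 2; in particular, every maximal clique has exactly 4 vertices and there are exactly 16 maximal cliques. -/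
/-- The non-orthogonality graph of a family of edges on the EPR vertices: distinct
`u, v` are adjacent exactly when no edge of the family contains both. -/
def NOGraph (E : Finset (Finset EPRVertex)) : SimpleGraph EPRVertex where
  Adj u v := u ≠ v ∧ ∀ e ∈ E, ¬(u ∈ e ∧ v ∈ e)
  symm := by
    constructor
    intro u v ⟨hne, h⟩
    exact ⟨hne.symm, fun e he hv => h e he ⟨hv.2, hv.1⟩⟩
  loopless := by
    constructor
    intro u ⟨hne, _⟩
    exact hne rfl

/-- A maximal clique: a clique which is not properly contained in any other clique. -/
def IsMaxClique (G : SimpleGraph EPRVertex) (s : Set EPRVertex) : Prop :=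
  G.IsClique s ∧ ∀ t : Set EPRVertex, G.IsClique t → s ⊆ t → s = t

/-- The local deterministic model determined by response functions `ε, δ`. -/
def localDet (ε δ : Fin 2 → Fin 2) : Finset EPRVertex :=
  Finset.univ.image fun xy : Fin 2 × Fin 2 => (ε xy.1, δ xy.2, xy.1, xy.2)
section Aux

local instance impDec (p q : Prop) [dp : Decidable p] [dq : Decidable q] : Decidable (p → q) :=
  match dp with
  | isFalse h => isTrue fun hp => absurd hp h
  | isTrue h => match dq with
    | isTrue hq => isTrue fun _ => hq
    | isFalse hq => isFalse fun f => hq (f h)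

lemma adj_iff (u v : EPRVertex) :
    (NOGraph FREdges).Adj u v ↔
      u ≠ v ∧ (u.2.2.1 = v.2.2.1 → u.1 = v.1 ∧ u.2.2.2 ≠ v.2.2.2) ∧
        (u.2.2.2 = v.2.2.2 → u.2.1 = v.2.1 ∧ u.2.2.1 ≠ v.2.2.1) := by
  have h1 : ∀ u v : EPRVertex,
      (u ≠ v ∧ ∀ e ∈ FREdges, ¬(u ∈ e ∧ v ∈ e)) ↔
        (u ≠ v ∧ (u.2.2.1 = v.2.2.1 → u.1 = v.1 ∧ u.2.2.2 ≠ v.2.2.2) ∧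
          (u.2.2.2 = v.2.2.2 → u.2.1 = v.2.1 ∧ u.2.2.1 ≠ v.2.2.1)) := by decide
  exact h1 u v

end Aux

lemma eprv_ext {p q : EPRVertex} (h1 : p.1 = q.1) (h2 : p.2.1 = q.2.1)
    (h3 : p.2.2.1 = q.2.2.1) (h4 : p.2.2.2 = q.2.2.2) : p = q := by
  obtain ⟨a, b, x, y⟩ := p
  obtain ⟨a', b', x', y'⟩ := q
  simp_all

lemma fin2_cases {y : Fin 2} (h0 : y ≠ 0) (h1 : y ≠ 1) : False := by
  fin_cases y <;> simp_all

lemma mem_localDet (ε δ : Fin 2 → Fin 2) (v : EPRVertex) :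
    v ∈ localDet ε δ ↔ v.1 = ε v.2.2.1 ∧ v.2.1 = δ v.2.2.2 := by
  simp only [localDet, Finset.mem_image, Finset.mem_univ, true_and]
  constructor
  · rintro ⟨⟨x, y⟩, rfl⟩; exact ⟨rfl, rfl⟩
  · rintro ⟨h1, h2⟩
    refine ⟨(v.2.2.1, v.2.2.2), ?_⟩
    obtain ⟨a, b, x, y⟩ := v
    simp_all

lemma localDet_isClique (ε δ : Fin 2 → Fin 2) :
    (NOGraph FREdges).IsClique (localDet ε δ : Set EPRVertex) := by
  intro u hu v hv hne
  rw [Finset.mem_coe, mem_localDet] at hu hv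
  rw [adj_iff]
  refine ⟨hne, fun hx => ⟨by rw [hu.1, hv.1, hx], fun hy => ?_⟩,
    fun hy => ⟨by rw [hu.2, hv.2, hy], fun hx => ?_⟩⟩ <;>
  · apply hne
    obtain ⟨a, b, x, y⟩ := u
    obtain ⟨a', b', x', y'⟩ := v
    simp only at hu hv hx hy
    simp [hu.1, hu.2, hv.1, hv.2, hx, hy]

lemma localDet_isMaxClique (ε δ : Fin 2 → Fin 2) :
    IsMaxClique (NOGraph FREdges) ((localDet ε δ : Finset EPRVertex) : Set EPRVertex) := by
  refine ⟨localDet_isClique ε δ, fun t ht hsub => Set.Subset.antisymm hsub ?_⟩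
  intro w hw
  by_contra hws
  have hmem : ∀ y : Fin 2, ((ε w.2.2.1, δ y, w.2.2.1, y) : EPRVertex) ∈ t := by
    intro y
    exact hsub (by rw [Finset.mem_coe, mem_localDet]; exact ⟨rfl, rfl⟩)
  have hne : ∀ y : Fin 2, w ≠ (ε w.2.2.1, δ y, w.2.2.1, y) := by
    intro y h
    apply hws
    rw [Finset.mem_coe, mem_localDet, h]
    exact ⟨rfl, rfl⟩
  have key : ∀ y : Fin 2, w.2.2.2 ≠ y := by
    intro y
    have hadj := ht hw (hmem y) (hne y)
    rw [adj_iff] at hadj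
    exact (hadj.2.1 rfl).2
  exact fin2_cases (key 0) (key 1)

lemma maxClique_eq_localDet {s : Finset EPRVertex}
    (h : IsMaxClique (NOGraph FREdges) (s : Set EPRVertex)) :
    ∃ ε δ : Fin 2 → Fin 2, s = localDet ε δ := by
  obtain ⟨hcl, hmax⟩ := h
  -- pairwise coherence facts
  have sameA : ∀ u ∈ s, ∀ v ∈ s, u.2.2.1 = v.2.2.1 → u.1 = v.1 := by
    intro u hu v hv hx
    by_cases huv : u = v
    · rw [huv]
    · exact ((adj_iff u v).mp (hcl hu hv huv)).2.1 hx |>.1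
  have sameB : ∀ u ∈ s, ∀ v ∈ s, u.2.2.2 = v.2.2.2 → u.2.1 = v.2.1 := by
    intro u hu v hv hy
    by_cases huv : u = v
    · rw [huv]
    · exact ((adj_iff u v).mp (hcl hu hv huv)).2.2 hy |>.1
  have uniq : ∀ u ∈ s, ∀ v ∈ s, u.2.2.1 = v.2.2.1 → u.2.2.2 = v.2.2.2 → u = v := by
    intro u hu v hv hx hy
    by_contra huv
    exact ((adj_iff u v).mp (hcl hu hv huv)).2.1 hx |>.2 hy
  -- existence of a vertex at each setting
  have exist : ∀ x y : Fin 2, ∃ v ∈ s, v.2.2.1 = x ∧ v.2.2.2 = y := by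
    intro x y
    by_contra hno
    push_neg at hno
    classical
    set a : Fin 2 := if hA : ∃ w ∈ s, w.2.2.1 = x then hA.choose.1 else 0 with ha
    set b : Fin 2 := if hB : ∃ w ∈ s, w.2.2.2 = y then hB.choose.2.1 else 0 with hb
    set v : EPRVertex := (a, b, x, y) with hv
    have hvs : v ∉ (s : Set EPRVertex) := by
      intro hmem
      exact hno v hmem rfl rfl
    have hclique : (NOGraph FREdges).IsClique (insert v (s : Set EPRVertex)) := by
      apply hcl.insert
      intro u hu hune
      rw [adj_iff]
      refine ⟨hune, fun hx => ?_, fun hy => ?_⟩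
      · -- v.2.2.1 = u.2.2.1, i.e. x = u.2.2.1
        have hx' : x = u.2.2.1 := hx
        have hA : ∃ w ∈ s, w.2.2.1 = x := ⟨u, hu, hx'.symm⟩
        have haw : a = hA.choose.1 := by rw [ha, dif_pos hA]
        obtain ⟨hws, hwx⟩ := hA.choose_spec
        have h1 : hA.choose.1 = u.1 := sameA _ hws _ hu (by rw [hwx, hx'])
        refine ⟨show a = u.1 by rw [haw, h1], fun hyy => ?_⟩
        have hyy' : y = u.2.2.2 := hyy
        exact hno u hu hx'.symm hyy'.symm
      · have hy' : y = u.2.2.2 := hy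
        have hB : ∃ w ∈ s, w.2.2.2 = y := ⟨u, hu, hy'.symm⟩
        have hbw : b = hB.choose.2.1 := by rw [hb, dif_pos hB]
        obtain ⟨hws, hwy⟩ := hB.choose_spec
        have h1 : hB.choose.2.1 = u.2.1 := sameB _ hws _ hu (by rw [hwy, hy'])
        refine ⟨show b = u.2.1 by rw [hbw, h1], fun hxx => ?_⟩
        have hxx' : x = u.2.2.1 := hxx
        exact hno u hu hxx'.symm hy'.symm
    have := hmax _ hclique (Set.subset_insert v _)
    exact hvs (this ▸ Set.mem_insert v _)
  classical
  -- the vertex at each setting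
  let vtx : Fin 2 → Fin 2 → EPRVertex := fun x y => (exist x y).choose
  have vtx_mem : ∀ x y, vtx x y ∈ s := fun x y => (exist x y).choose_spec.1
  have vtx_x : ∀ x y, (vtx x y).2.2.1 = x := fun x y => (exist x y).choose_spec.2.1
  have vtx_y : ∀ x y, (vtx x y).2.2.2 = y := fun x y => (exist x y).choose_spec.2.2
  refine ⟨fun x => (vtx x 0).1, fun y => (vtx 0 y).2.1, ?_⟩
  have vtx_eq : ∀ x y, vtx x y = ((vtx x 0).1, (vtx 0 y).2.1, x, y) := by
    intro x y
    have h1 : (vtx x y).1 = (vtx x 0).1 :=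
      sameA _ (vtx_mem x y) _ (vtx_mem x 0) (by rw [vtx_x, vtx_x])
    have h2 : (vtx x y).2.1 = (vtx 0 y).2.1 :=
      sameB _ (vtx_mem x y) _ (vtx_mem 0 y) (by rw [vtx_y, vtx_y])
    exact eprv_ext h1 h2 (vtx_x x y) (vtx_y x y)
  ext w
  rw [mem_localDet]
  constructor
  · intro hw
    have := uniq w hw _ (vtx_mem w.2.2.1 w.2.2.2)
      (by rw [vtx_x]) (by rw [vtx_y])
    rw [this, vtx_eq]
    exact ⟨rfl, rfl⟩
  · intro ⟨h1, h2⟩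
    have hw : w = vtx w.2.2.1 w.2.2.2 := by
      rw [vtx_eq]
      exact eprv_ext h1 h2 rfl rfl
    rw [hw]; exact vtx_mem _ _

lemma localDet_card (ε δ : Fin 2 → Fin 2) : (localDet ε δ).card = 4 := by
  rw [localDet, Finset.card_image_of_injective]
  · simp
  · intro ⟨x, y⟩ ⟨x', y'⟩ h
    simp only [Prod.mk.injEq] at h
    simp [h.2.2.1, h.2.2.2]

lemma localDet_inj : Function.Injective
    (fun p : (Fin 2 → Fin 2) × (Fin 2 → Fin 2) => localDet p.1 p.2) := by
  intro ⟨ε, δ⟩ ⟨ε', δ'⟩ h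
  simp only at h
  have key : ∀ x y : Fin 2, ε x = ε' x ∧ δ y = δ' y := by
    intro x y
    have hm : ((ε x, δ y, x, y) : EPRVertex) ∈ localDet ε δ := by
      rw [mem_localDet]; exact ⟨rfl, rfl⟩
    rw [h, mem_localDet] at hm
    exact hm
  have hε : ε = ε' := funext fun x => (key x 0).1
  have hδ : δ = δ' := funext fun y => (key 0 y).2
  rw [Prod.mk.injEq]
  exact ⟨hε, hδ⟩

/-- the maximal cliques of the non-orthogonality graph of the
Foulis–Randall product of the EPR scenario are exactly the 16 local deterministic
models `{(ε x, δ y, x, y) : x, y}`; each has exactly 4 vertices, and there are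
exactly 16 of them. -/
theorem maxCliques_of_NO_FR_eq_localDet :
    (∀ s : Finset EPRVertex,
      IsMaxClique (NOGraph FREdges) (s : Set EPRVertex) ↔
        ∃ ε δ : Fin 2 → Fin 2, s = localDet ε δ) ∧
    (∀ s : Finset EPRVertex,
      IsMaxClique (NOGraph FREdges) (s : Set EPRVertex) → s.card = 4) ∧
    Nat.card {s : Finset EPRVertex // IsMaxClique (NOGraph FREdges) (s : Set EPRVertex)}
      = 16 := by
  have main : ∀ s : Finset EPRVertex,
      IsMaxClique (NOGraph FREdges) (s : Set EPRVertex) ↔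
        ∃ ε δ : Fin 2 → Fin 2, s = localDet ε δ := by
    intro s
    constructor
    · exact maxClique_eq_localDet
    · rintro ⟨ε, δ, rfl⟩
      exact localDet_isMaxClique ε δ
  refine ⟨main, fun s hs => ?_, ?_⟩
  · obtain ⟨ε, δ, rfl⟩ := (main s).mp hs
    exact localDet_card ε δ
  · have hbij : Function.Bijective
        (fun p : (Fin 2 → Fin 2) × (Fin 2 → Fin 2) =>
          (⟨localDet p.1 p.2, (main _).mpr ⟨p.1, p.2, rfl⟩⟩ :
            {s : Finset EPRVertex // IsMaxClique (NOGraph FREdges) (s : Set EPRVertex)})) := by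
      constructor
      · intro p q h
        exact localDet_inj (by simpa using congrArg Subtype.val h)
      · rintro ⟨s, hs⟩
        obtain ⟨ε, δ, rfl⟩ := (main s).mp hs
        exact ⟨(ε, δ), rfl⟩
    rw [← Nat.card_eq_of_bijective _ hbij]
    simp [Nat.card_eq_fintype_card]
end

section
/- Let c be a deterministic model on the EPR scenario. For every x ∈ Fin 2 and f : Fin 2 → Fin 2, |c ∩ E^{AB}_{x,f}| + |c ∩ E^{AB}_{x,f'}| = 2, where f'(a) = 1 − f(a), and similarly for B→A protocol edges. Consequently ||c ∩ e| − 1| ≤ 1 for every Foulis–Randall edge e, the disturbance D(c) is an even natural number, and D(c) ≥ 2 whenever c violates the no-disturbance condition. -/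
/-! ### Auxiliary machinery -/

/-- The deterministic model determined by response functions `A`, `B`. -/
def detC (A B : Fin 2 → Fin 2 → Fin 2) : Finset EPRVertex :=
  Finset.image (fun xy : Fin 2 × Fin 2 => (A xy.1 xy.2, B xy.1 xy.2, xy.1, xy.2)) Finset.univ

/-- Decidable (counting) version of the no-disturbance condition. -/
def NDD (c : Finset EPRVertex) : Prop :=
  (∀ a x : Fin 2, (Finset.univ.filter fun b => (a, b, x, 0) ∈ c).card =
      (Finset.univ.filter fun b => (a, b, x, 1) ∈ c).card) ∧
  (∀ b y : Fin 2, (Finset.univ.filter fun a => (a, b, 0, y) ∈ c).card =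
      (Finset.univ.filter fun a => (a, b, 1, y) ∈ c).card)

lemma nd_iff (c : Finset EPRVertex) : IsND (indicator c) ↔ NDD c := by
  unfold IsND NDD indicator
  simp only [Finset.sum_boole, Nat.cast_inj]

set_option maxHeartbeats 4000000 in
set_option maxRecDepth 4000 in
lemma keyAB : ∀ A B : Fin 2 → Fin 2 → Fin 2, ∀ (x : Fin 2) (f : Fin 2 → Fin 2),
    (detC A B ∩ edgeAB x f).card + (detC A B ∩ edgeAB x fun a => 1 - f a).card = 2 := by
  decide

set_option maxHeartbeats 4000000 in
set_option maxRecDepth 4000 in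
lemma keyBA : ∀ A B : Fin 2 → Fin 2 → Fin 2, ∀ (y : Fin 2) (g : Fin 2 → Fin 2),
    (detC A B ∩ edgeBA y g).card + (detC A B ∩ edgeBA y fun b => 1 - g b).card = 2 := by
  decide

set_option maxHeartbeats 4000000 in
set_option maxRecDepth 4000 in
lemma keyBound' : ∀ A B : Fin 2 → Fin 2 → Fin 2,
    (∀ xy : Fin 2 × Fin 2, |((detC A B ∩ cartEdge xy.1 xy.2).card : ℤ) - 1| ≤ 1) ∧
    (∀ xf : Fin 2 × (Fin 2 → Fin 2), |((detC A B ∩ edgeAB xf.1 xf.2).card : ℤ) - 1| ≤ 1) ∧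
    (∀ yg : Fin 2 × (Fin 2 → Fin 2), |((detC A B ∩ edgeBA yg.1 yg.2).card : ℤ) - 1| ≤ 1) := by
  decide

lemma keyBound (A B : Fin 2 → Fin 2 → Fin 2) : ∀ e ∈ FREdges,
    |((detC A B ∩ e).card : ℤ) - 1| ≤ 1 := by
  intro e he
  simp only [FREdges, Finset.mem_union, Finset.mem_image, Finset.mem_univ, true_and] at he
  obtain ⟨k1, k2, k3⟩ := keyBound' A B
  rcases he with (⟨xy, rfl⟩ | ⟨xf, rfl⟩) | ⟨yg, rfl⟩
  · exact k1 xy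
  · exact k2 xf
  · exact k3 yg

instance nddDecidable (c : Finset EPRVertex) : Decidable (NDD c) := by
  unfold NDD; infer_instance

set_option maxHeartbeats 4000000 in
set_option maxRecDepth 4000 in
lemma keyEven : ∀ A B : Fin 2 → Fin 2 → Fin 2, Even (disturbance (detC A B)) := by
  decide

set_option maxHeartbeats 4000000 in
set_option maxRecDepth 4000 in
lemma keyND : ∀ A B : Fin 2 → Fin 2 → Fin 2,
    ¬ NDD (detC A B) → 2 ≤ disturbance (detC A B) := by
  decide

/-- for a deterministic model `c`, complementary protocol edges together
meet `c` in exactly two vertices; hence `||c ∩ e| − 1| ≤ 1` on every FR edge, the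
disturbance is even, and `D(c) ≥ 2` whenever `c` violates the ND condition. -/
theorem detModel_protocol_edge_pair_card
    (c : Finset EPRVertex) (hc : IsDetModel c) :
    (∀ (x : Fin 2) (f : Fin 2 → Fin 2),
      (c ∩ edgeAB x f).card + (c ∩ edgeAB x fun a => 1 - f a).card = 2) ∧
    (∀ (y : Fin 2) (g : Fin 2 → Fin 2),
      (c ∩ edgeBA y g).card + (c ∩ edgeBA y fun b => 1 - g b).card = 2) ∧
    (∀ e ∈ FREdges, |((c ∩ e).card : ℤ) - 1| ≤ 1) ∧
    Even (disturbance c) ∧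
    (¬ IsND (indicator c) → 2 ≤ disturbance c) := by
  have hv : ∀ x y : Fin 2, ∃ v : EPRVertex, c ∩ cartEdge x y = {v} := fun x y =>
    Finset.card_eq_one.mp (hc x y)
  choose v hvv using hv
  have hmem : ∀ x y, v x y ∈ c ∩ cartEdge x y := fun x y => by
    rw [hvv]; exact Finset.mem_singleton_self _
  have hvc : ∀ x y, v x y ∈ c := fun x y => (Finset.mem_inter.mp (hmem x y)).1
  have hve : ∀ x y, (v x y).2.2.1 = x ∧ (v x y).2.2.2 = y := fun x y => by
    have h := (Finset.mem_inter.mp (hmem x y)).2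
    simpa [cartEdge] using h
  have hvform : ∀ x y, v x y = ((v x y).1, (v x y).2.1, x, y) := by
    intro x y
    obtain ⟨h1, h2⟩ := hve x y
    simp [Prod.ext_iff, h1, h2]
  have hc' : c = detC (fun x y => (v x y).1) (fun x y => (v x y).2.1) := by
    apply Finset.Subset.antisymm
    · intro u hu
      have hu2 : u ∈ c ∩ cartEdge u.2.2.1 u.2.2.2 :=
        Finset.mem_inter.mpr ⟨hu, by simp [cartEdge]⟩
      rw [hvv] at hu2
      have heq : u = v u.2.2.1 u.2.2.2 := Finset.mem_singleton.mp hu2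
      simp only [detC, Finset.mem_image]
      refine ⟨(u.2.2.1, u.2.2.2), Finset.mem_univ _, ?_⟩
      conv_rhs => rw [heq]
      exact (hvform u.2.2.1 u.2.2.2).symm
    · intro u hu
      simp only [detC, Finset.mem_image] at hu
      obtain ⟨xy, _, rfl⟩ := hu
      rw [← hvform xy.1 xy.2]
      exact hvc xy.1 xy.2
  rw [hc']
  refine ⟨keyAB _ _, keyBA _ _, keyBound _ _, keyEven _ _, fun h => keyND _ _ ?_⟩
  exact fun hn => h ((nd_iff _).mpr hn)
end

section
/- For all ε, δ : Fin 2 → ℤ with values in {−1, 1}, |ε(0)δ(0) + ε(0)δ(1) + ε(1)δ(0) − ε(1)δ(1)| ≤ 2; consequently, every deterministic model on the EPR scenario that satisfies the no-disturbance condition has Bell parameter B(1_c) ≤ 2, and every probabilistic model p that is a convex combination p = Σ_c q_c · 1_c of indicators of ND-satisfying deterministic models (q_c ≥ 0, Σ_c q_c = 1) satisfies B(p) ≤ 2. -/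
private lemma fin2_cases_s8 (i : Fin 2) : i = 0 ∨ i = 1 := by omega

private lemma real_chsh (e d : Fin 2 → ℝ) (he : ∀ i, e i = 1 ∨ e i = -1)
    (hd : ∀ i, d i = 1 ∨ d i = -1) (x y : Fin 2) :
    |(∑ x' : Fin 2, ∑ y' : Fin 2, e x' * d y') - 2 * (e x * d y)| ≤ 2 := by
  rcases he 0 with h1 | h1 <;> rcases he 1 with h2 | h2 <;>
    rcases hd 0 with h3 | h3 <;> rcases hd 1 with h4 | h4 <;>
    fin_cases x <;> fin_cases y <;>
    simp only [Fin.mk_zero, Fin.mk_one, Fin.sum_univ_two, h1, h2, h3, h4, abs_le] <;> norm_num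

private lemma sum_ind_left (B : Fin 2) :
    ((if (0 : Fin 2) = B then (1 : ℝ) else 0) + if (1 : Fin 2) = B then 1 else 0) = 1 := by
  rcases fin2_cases_s8 B with h | h <;> subst h <;> norm_num

private lemma det_bell (c : Finset EPRVertex) (hdet : IsDetModel c)
    (hnd : IsND (indicator c)) : Bell (indicator c) ≤ 2 := by
  have hv : ∀ x y : Fin 2, ∃ v, c ∩ cartEdge x y = {v} := by
    intro x y; exact Finset.card_eq_one.mp (hdet x y)
  choose v hv using hv
  have hmem : ∀ (a b x y : Fin 2), ((a, b, x, y) ∈ c ↔ (a, b, x, y) = v x y) := by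
    intro a b x y
    constructor
    · intro h
      have hm : (a, b, x, y) ∈ c ∩ cartEdge x y := by
        refine Finset.mem_inter.mpr ⟨h, ?_⟩
        simp [cartEdge]
      rw [hv] at hm; simpa using hm
    · intro h
      have hm : (a, b, x, y) ∈ c ∩ cartEdge x y := by rw [hv, h]; simp
      exact (Finset.mem_inter.mp hm).1
  have hco : ∀ x y : Fin 2, (v x y).2.2.1 = x ∧ (v x y).2.2.2 = y := by
    intro x y
    have hm : v x y ∈ c ∩ cartEdge x y := by rw [hv]; simp
    have h2 := (Finset.mem_inter.mp hm).2
    simp only [cartEdge, Finset.mem_filter] at h2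
    exact h2.2
  have hiff : ∀ a b x y : Fin 2,
      ((a, b, x, y) = v x y ↔ a = (v x y).1 ∧ b = (v x y).2.1) := by
    intro a b x y
    obtain ⟨hx, hy⟩ := hco x y
    constructor
    · intro h
      exact ⟨congrArg Prod.fst h, congrArg (fun p : EPRVertex => p.2.1) h⟩
    · rintro ⟨h1, h2⟩
      rw [Prod.ext_iff, Prod.ext_iff, Prod.ext_iff]
      exact ⟨h1, h2, hx.symm, hy.symm⟩
  have hind : ∀ a b x y : Fin 2,
      indicator c (a, b, x, y) = if a = (v x y).1 ∧ b = (v x y).2.1 then 1 else 0 := by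
    intro a b x y
    rw [indicator]
    exact if_congr ((hmem a b x y).trans (hiff a b x y)) rfl rfl
  have ha : ∀ x : Fin 2, (v x 0).1 = (v x 1).1 := by
    intro x
    by_contra hc
    have h := hnd.1 (v x 0).1 x
    simp only [Fin.sum_univ_two, hind, eq_self_iff_true, true_and, hc, false_and,
      if_false] at h
    rw [sum_ind_left] at h
    norm_num at h
  have hb : ∀ y : Fin 2, (v 0 y).2.1 = (v 1 y).2.1 := by
    intro y
    by_contra hc
    have h := hnd.2 (v 0 y).2.1 y
    simp only [Fin.sum_univ_two, hind, eq_self_iff_true, and_true, hc, and_false,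
      if_false] at h
    rw [sum_ind_left] at h
    norm_num at h
  have ha' : ∀ x y : Fin 2, (v x y).1 = (v x 0).1 := by
    intro x y
    rcases fin2_cases_s8 y with h | h <;> subst h
    · rfl
    · exact (ha x).symm
  have hb' : ∀ x y : Fin 2, (v x y).2.1 = (v 0 y).2.1 := by
    intro x y
    rcases fin2_cases_s8 x with h | h <;> subst h
    · rfl
    · exact (hb y).symm
  set e : Fin 2 → ℝ := fun x => (-1 : ℝ) ^ ((v x 0).1 : ℕ) with he_def
  set d : Fin 2 → ℝ := fun y => (-1 : ℝ) ^ ((v 0 y).2.1 : ℕ) with hd_def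
  have hcorr : ∀ x y : Fin 2, corr x y (indicator c) = e x * d y := by
    intro x y
    rw [corr]
    simp only [Fin.sum_univ_two, hind, he_def, hd_def]
    rw [← ha' x y, ← hb' x y]
    rcases fin2_cases_s8 (v x y).1 with h1 | h1 <;>
      rcases fin2_cases_s8 (v x y).2.1 with h2 | h2 <;>
      rw [h1, h2] <;> norm_num
  have he1 : ∀ i, e i = 1 ∨ e i = -1 := by
    intro i
    rcases fin2_cases_s8 (v i 0).1 with h | h <;> simp [he_def, h]
  have hd1 : ∀ i, d i = 1 ∨ d i = -1 := by
    intro i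
    rcases fin2_cases_s8 (v 0 i).2.1 with h | h <;> simp [hd_def, h]
  rw [Bell]
  apply Finset.sup'_le
  intro xy _
  simp only [hcorr]
  exact real_chsh e d he1 hd1 xy.1 xy.2

/-- the deterministic CHSH bound `|ε₀δ₀ + ε₀δ₁ + ε₁δ₀ − ε₁δ₁| ≤ 2` for
`±1`-valued `ε, δ`; consequently ND deterministic models have Bell parameter `≤ 2`,
and so does any convex combination of indicators of ND deterministic models. -/
theorem chsh_deterministic_bound_and_classical_bell_bound :
    (∀ ε δ : Fin 2 → ℤ, (∀ i, ε i = 1 ∨ ε i = -1) → (∀ i, δ i = 1 ∨ δ i = -1) →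
      |ε 0 * δ 0 + ε 0 * δ 1 + ε 1 * δ 0 - ε 1 * δ 1| ≤ 2) ∧
    (∀ c : Finset EPRVertex, IsDetModel c → IsND (indicator c) →
      Bell (indicator c) ≤ 2) ∧
    (∀ (q : Finset EPRVertex → ℝ) (p : EPRVertex → ℝ),
      (∀ c, 0 ≤ q c) →
      (∀ c, q c ≠ 0 → IsDetModel c ∧ IsND (indicator c)) →
      (∑ c : Finset EPRVertex, q c) = 1 →
      (∀ v, p v = ∑ c : Finset EPRVertex, q c * indicator c v) →
      Bell p ≤ 2) := by
  have part1 : ∀ ε δ : Fin 2 → ℤ, (∀ i, ε i = 1 ∨ ε i = -1) → (∀ i, δ i = 1 ∨ δ i = -1) →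
      |ε 0 * δ 0 + ε 0 * δ 1 + ε 1 * δ 0 - ε 1 * δ 1| ≤ 2 := by
    intro ε δ hε hδ
    rcases hε 0 with h1 | h1 <;> rcases hε 1 with h2 | h2 <;>
      rcases hδ 0 with h3 | h3 <;> rcases hδ 1 with h4 | h4 <;>
      simp [h1, h2, h3, h4]
  refine ⟨part1, det_bell, ?_⟩
  intro q p hq hsupp hsum hp
  have hcorr : ∀ x y : Fin 2, corr x y p = ∑ c : Finset EPRVertex, q c * corr x y (indicator c) := by
    intro x y
    simp only [corr, Fin.sum_univ_two, hp, Finset.mul_sum, mul_add]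
    rw [← Finset.sum_add_distrib, ← Finset.sum_add_distrib, ← Finset.sum_add_distrib]
    exact Finset.sum_congr rfl fun c _ => by ring
  rw [Bell]
  apply Finset.sup'_le
  intro xy _
  have key : (∑ x' : Fin 2, ∑ y' : Fin 2, corr x' y' p) - 2 * corr xy.1 xy.2 p
      = ∑ c : Finset EPRVertex, q c *
        ((∑ x' : Fin 2, ∑ y' : Fin 2, corr x' y' (indicator c)) - 2 * corr xy.1 xy.2 (indicator c)) := by
    simp only [hcorr, Fin.sum_univ_two, Finset.mul_sum]
    rw [← Finset.sum_add_distrib, ← Finset.sum_add_distrib, ← Finset.sum_add_distrib,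
      ← Finset.sum_sub_distrib]
    refine Finset.sum_congr rfl fun c _ => ?_
    simp only [corr, Fin.sum_univ_two]
    ring
  rw [key]
  calc |∑ c : Finset EPRVertex, q c *
        ((∑ x' : Fin 2, ∑ y' : Fin 2, corr x' y' (indicator c)) - 2 * corr xy.1 xy.2 (indicator c))|
      ≤ ∑ c : Finset EPRVertex, |q c *
        ((∑ x' : Fin 2, ∑ y' : Fin 2, corr x' y' (indicator c)) - 2 * corr xy.1 xy.2 (indicator c))| :=
        Finset.abs_sum_le_sum_abs _ _
    _ ≤ ∑ c : Finset EPRVertex, q c * 2 := by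
        apply Finset.sum_le_sum
        intro c _
        rw [abs_mul, abs_of_nonneg (hq c)]
        rcases eq_or_ne (q c) 0 with h | h
        · simp [h]
        · apply mul_le_mul_of_nonneg_left _ (hq c)
          obtain ⟨hdet, hnd⟩ := hsupp c h
          have := det_bell c hdet hnd
          rw [Bell] at this
          exact le_trans (Finset.le_sup' (fun xy : Fin 2 × Fin 2 =>
            |(∑ x' : Fin 2, ∑ y' : Fin 2, corr x' y' (indicator c)) -
              2 * corr xy.1 xy.2 (indicator c)|) (Finset.mem_univ xy)) this
    _ = 2 := by rw [← Finset.sum_mul, hsum, one_mul]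
end

section
/- For every deterministic model c on the EPR scenario, the Bell parameter of its indicator satisfies B(1_c) ≤ 2 + D(c), where D(c) is the disturbance of c; equality of B(1_c) with 2 is attained whenever D(c) = 0. -/
/-! ### Auxiliary machinery -/

def FF (A : Fin 2 × Fin 2 → Fin 2 × Fin 2) : Finset EPRVertex :=
  Finset.univ.image fun xy => ((A xy).1, (A xy).2, xy.1, xy.2)

lemma mem_FF (A : Fin 2 × Fin 2 → Fin 2 × Fin 2) (a b x y : Fin 2) :
    (a, b, x, y) ∈ FF A ↔ (a, b) = A (x, y) := by
  simp only [FF, Finset.mem_image, Finset.mem_univ, true_and, Prod.ext_iff]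
  constructor
  · rintro ⟨⟨u1, u2⟩, h1, h2, h3, h4⟩
    simp only at h1 h2 h3 h4
    subst h3; subst h4
    exact ⟨h1.symm, h2.symm⟩
  · rintro ⟨h1, h2⟩
    exact ⟨(x, y), h1.symm, h2.symm, rfl, rfl⟩

def eps (A : Fin 2 × Fin 2 → Fin 2 × Fin 2) (xy : Fin 2 × Fin 2) : ℤ :=
  (-1) ^ (((A xy).1 : ℕ) + ((A xy).2 : ℕ))

set_option maxRecDepth 100000 in
set_option maxHeartbeats 4000000 in
theorem key : ∀ A : Fin 2 × Fin 2 → Fin 2 × Fin 2,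
    (∀ xy : Fin 2 × Fin 2,
      |(∑ x' : Fin 2, ∑ y' : Fin 2, eps A (x', y')) - 2 * eps A xy| ≤ 2 + (disturbance (FF A) : ℤ)) ∧
    (disturbance (FF A) = 0 → ∀ xy : Fin 2 × Fin 2,
      |(∑ x' : Fin 2, ∑ y' : Fin 2, eps A (x', y')) - 2 * eps A xy| = 2) := by decide

lemma corr_FF (A : Fin 2 × Fin 2 → Fin 2 × Fin 2) (x y : Fin 2) :
    corr x y (indicator (FF A)) = ((eps A (x, y) : ℤ) : ℝ) := by
  unfold corr indicator eps
  rcases hA : A (x, y) with ⟨a0, b0⟩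
  simp only [mem_FF, hA, Prod.mk.injEq, Fin.sum_univ_two]
  fin_cases a0 <;> fin_cases b0 <;> norm_num

lemma bell_abs (A : Fin 2 × Fin 2 → Fin 2 × Fin 2) (xy : Fin 2 × Fin 2) :
    |(∑ x' : Fin 2, ∑ y' : Fin 2, corr x' y' (indicator (FF A))) -
        2 * corr xy.1 xy.2 (indicator (FF A))| =
      ((|(∑ x' : Fin 2, ∑ y' : Fin 2, eps A (x', y')) - 2 * eps A xy| : ℤ) : ℝ) := by
  rcases xy with ⟨x, y⟩
  simp only [corr_FF]
  push_cast
  ring_nf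

theorem main_FF (A : Fin 2 × Fin 2 → Fin 2 × Fin 2) :
    Bell (indicator (FF A)) ≤ 2 + (disturbance (FF A) : ℝ) ∧
    (disturbance (FF A) = 0 → Bell (indicator (FF A)) = 2) := by
  constructor
  · apply Finset.sup'_le
    intro xy _
    rw [bell_abs]
    have h := (key A).1 xy
    calc ((|(∑ x' : Fin 2, ∑ y' : Fin 2, eps A (x', y')) - 2 * eps A xy| : ℤ) : ℝ)
        ≤ ((2 + (disturbance (FF A) : ℤ) : ℤ) : ℝ) := by exact_mod_cast h
      _ = 2 + (disturbance (FF A) : ℝ) := by push_cast; ring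
  · intro hD
    have h := (key A).2 hD
    have hconst : ∀ xy : Fin 2 × Fin 2,
        |(∑ x' : Fin 2, ∑ y' : Fin 2, corr x' y' (indicator (FF A))) -
          2 * corr xy.1 xy.2 (indicator (FF A))| = 2 := by
      intro xy
      rw [bell_abs, h xy]
      norm_num
    unfold Bell
    apply le_antisymm
    · apply Finset.sup'_le
      intro xy _
      exact le_of_eq (hconst xy)
    · refine le_trans (le_of_eq (hconst (0, 0)).symm) ?_
      exact Finset.le_sup'
        (fun xy : Fin 2 × Fin 2 =>
          |(∑ x' : Fin 2, ∑ y' : Fin 2, corr x' y' (indicator (FF A))) -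
            2 * corr xy.1 xy.2 (indicator (FF A))|)
        (Finset.mem_univ ((0 : Fin 2), (0 : Fin 2)))

/-- for every deterministic model `c`, `B(1_c) ≤ 2 + D(c)`, with
`B(1_c) = 2` whenever `D(c) = 0`. -/
theorem detModel_bell_le_two_add_disturbance
    (c : Finset EPRVertex) (hc : IsDetModel c) :
    Bell (indicator c) ≤ 2 + (disturbance c : ℝ) ∧
    (disturbance c = 0 → Bell (indicator c) = 2) := by
  have h : ∀ xy : Fin 2 × Fin 2, ∃ v : EPRVertex, c ∩ cartEdge xy.1 xy.2 = {v} :=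
    fun xy => Finset.card_eq_one.mp (hc xy.1 xy.2)
  choose w hw using h
  have hwmem : ∀ xy : Fin 2 × Fin 2, w xy ∈ c ∩ cartEdge xy.1 xy.2 := by
    intro xy; rw [hw xy]; exact Finset.mem_singleton_self _
  have hwxy : ∀ xy : Fin 2 × Fin 2, (w xy).2.2.1 = xy.1 ∧ (w xy).2.2.2 = xy.2 := by
    intro xy
    have := (Finset.mem_inter.mp (hwmem xy)).2
    simpa [cartEdge] using this
  have hceq : c = FF (fun xy => ((w xy).1, (w xy).2.1)) := by
    ext v
    rcases v with ⟨a, b, x, y⟩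
    rw [mem_FF]
    constructor
    · intro hv
      have hmem : (a, b, x, y) ∈ c ∩ cartEdge x y := by
        simp [Finset.mem_inter, hv, cartEdge]
      rw [hw (x, y)] at hmem
      have := Finset.mem_singleton.mp hmem
      rw [← this]
    · intro hv
      have h1 := (hwxy (x, y)).1
      have h2 := (hwxy (x, y)).2
      have : (a, b, x, y) = w (x, y) := by
        rcases hveq : w (x, y) with ⟨wa, wb, wx, wy⟩
        rw [hveq] at hv h1 h2
        simp only at h1 h2
        simp only [Prod.mk.injEq] at hv ⊢
        exact ⟨hv.1, hv.2, h1.symm, h2.symm⟩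
      rw [this]
      exact (Finset.mem_inter.mp (hwmem (x, y))).1
  rw [hceq]
  exact main_FF _
end

section
/- Let p be a probabilistic model on the EPR scenario that is a convex combination p = Σ_c q_c · 1_c of indicators of deterministic models (the sum ranging over all deterministic models, q_c ≥ 0, Σ_c q_c = 1). Then B(p) ≤ 2 + Σ_c q_c · D(c); that is, the Bell parameter minus the total weighted disturbance of the decomposition never exceeds the classical bound B₀ = 2. -/
/-! ### Auxiliary machinery -/

/-- The deterministic model determined by outcome functions `a b : settings → outcome`. -/
def detSet (a b : Fin 2 → Fin 2 → Fin 2) : Finset EPRVertex :=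
  Finset.univ.image (fun xy : Fin 2 × Fin 2 => (a xy.1 xy.2, b xy.1 xy.2, xy.1, xy.2))

/-- The sign `(-1)^(a x y + b x y)` as an integer. -/
def sgn (a b : Fin 2 → Fin 2 → Fin 2) (x y : Fin 2) : ℤ := if a x y = b x y then 1 else -1

set_option maxRecDepth 10000 in
theorem key_bound : ∀ (a b : Fin 2 → Fin 2 → Fin 2) (x y : Fin 2),
    ((∑ x' : Fin 2, ∑ y' : Fin 2, sgn a b x' y') - 2 * sgn a b x y).natAbs
      ≤ 2 + disturbance (detSet a b) := by decide

lemma detModel_eq (c : Finset EPRVertex) (hc : IsDetModel c) :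
    ∃ a b : Fin 2 → Fin 2 → Fin 2, c = detSet a b := by
  have h : ∀ x y : Fin 2, ∃ u, c ∩ cartEdge x y = {u} := fun x y =>
    Finset.card_eq_one.mp (hc x y)
  choose u hu using h
  have hmem : ∀ x y, u x y ∈ c ∩ cartEdge x y := fun x y => (hu x y) ▸ Finset.mem_singleton_self _
  have hx : ∀ x y, (u x y).2.2.1 = x ∧ (u x y).2.2.2 = y := fun x y => by
    have := (Finset.mem_inter.mp (hmem x y)).2
    simpa [cartEdge] using this
  refine ⟨fun x y => (u x y).1, fun x y => (u x y).2.1, ?_⟩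
  ext v
  simp only [detSet, Finset.mem_image, Finset.mem_univ, true_and]
  constructor
  · intro hv
    refine ⟨(v.2.2.1, v.2.2.2), ?_⟩
    have hv2 : v ∈ c ∩ cartEdge v.2.2.1 v.2.2.2 := by
      simp [Finset.mem_inter, cartEdge, hv]
    rw [hu] at hv2
    have hv3 : v = u v.2.2.1 v.2.2.2 := Finset.mem_singleton.mp hv2
    obtain ⟨h1, h2⟩ := hx v.2.2.1 v.2.2.2
    rw [← hv3] at h1 h2
    show _ = v
    rw [← hv3, h1, h2]
  · rintro ⟨⟨x, y⟩, rfl⟩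
    obtain ⟨h1, h2⟩ := hx x y
    have hm := (Finset.mem_inter.mp (hmem x y)).1
    have he : ((u x y).1, (u x y).2.1, x, y) = u x y := by
      conv_rhs => rw [show u x y = ((u x y).1, (u x y).2.1, (u x y).2.2.1, (u x y).2.2.2) from rfl]
      rw [h1, h2]
    show ((u x y).1, (u x y).2.1, x, y) ∈ c
    rw [he]; exact hm

lemma corr_detSet (a b : Fin 2 → Fin 2 → Fin 2) (x y : Fin 2) :
    corr x y (indicator (detSet a b)) = (sgn a b x y : ℝ) := by
  have hmem : ∀ a' b' : Fin 2, ((a', b', x, y) ∈ detSet a b) ↔ (a' = a x y ∧ b' = b x y) := by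
    intro a' b'
    simp only [detSet, Finset.mem_image, Finset.mem_univ, true_and]
    constructor
    · rintro ⟨⟨x', y'⟩, h⟩
      simp only [Prod.mk.injEq] at h
      obtain ⟨h1, h2, h3, h4⟩ := h
      subst h3; subst h4
      exact ⟨h1.symm, h2.symm⟩
    · rintro ⟨rfl, rfl⟩; exact ⟨(x, y), rfl⟩
  simp only [corr, indicator, hmem, sgn, Fin.sum_univ_two]
  generalize a x y = A
  generalize b x y = B
  fin_cases A <;> fin_cases B <;> norm_num

lemma det_bound (c : Finset EPRVertex) (hc : IsDetModel c) (x y : Fin 2) :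
    |(∑ x' : Fin 2, ∑ y' : Fin 2, corr x' y' (indicator c)) - 2 * corr x y (indicator c)|
      ≤ 2 + (disturbance c : ℝ) := by
  obtain ⟨a, b, rfl⟩ := detModel_eq c hc
  simp only [corr_detSet]
  have h1 : ((∑ x' : Fin 2, ∑ y' : Fin 2, (sgn a b x' y' : ℝ)) - 2 * (sgn a b x y : ℝ))
      = (((∑ x' : Fin 2, ∑ y' : Fin 2, sgn a b x' y') - 2 * sgn a b x y : ℤ) : ℝ) := by
    push_cast; ring
  rw [h1, ← Int.cast_abs, Int.abs_eq_natAbs]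
  exact_mod_cast key_bound a b x y

/-- if a probabilistic model `p` is a convex combination of indicators of
deterministic models, then `B(p) ≤ 2 + Σ_c q_c·D(c)`: the Bell parameter minus the
total weighted disturbance never exceeds the classical bound `B₀ = 2`. -/
theorem bell_le_two_add_weighted_disturbance
    (q : Finset EPRVertex → ℝ) (p : EPRVertex → ℝ)
    (hp : IsProbModel p)
    (hq0 : ∀ c, 0 ≤ q c)
    (hsupp : ∀ c, q c ≠ 0 → IsDetModel c)
    (hq1 : (∑ c : Finset EPRVertex, q c) = 1)
    (hdecomp : ∀ v, p v = ∑ c : Finset EPRVertex, q c * indicator c v) :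
    Bell p ≤ 2 + ∑ c : Finset EPRVertex, q c * (disturbance c : ℝ) := by
  have hcorr : ∀ x y : Fin 2, corr x y p = ∑ c : Finset EPRVertex, q c * corr x y (indicator c) := by
    intro x y
    simp only [corr, hdecomp, Fin.sum_univ_two, Finset.mul_sum, mul_add,
      ← Finset.sum_add_distrib]
    refine Finset.sum_congr rfl fun c _ => by ring
  have hL : ∀ x y : Fin 2,
      |(∑ x' : Fin 2, ∑ y' : Fin 2, corr x' y' p) - 2 * corr x y p|
        ≤ 2 + ∑ c : Finset EPRVertex, q c * (disturbance c : ℝ) := by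
    intro x y
    have expand : (∑ x' : Fin 2, ∑ y' : Fin 2, corr x' y' p) - 2 * corr x y p
        = ∑ c : Finset EPRVertex, q c *
            ((∑ x' : Fin 2, ∑ y' : Fin 2, corr x' y' (indicator c))
              - 2 * corr x y (indicator c)) := by
      simp only [hcorr, Fin.sum_univ_two, mul_sub, mul_add, Finset.mul_sum,
        ← Finset.sum_add_distrib, ← Finset.sum_sub_distrib]
      refine Finset.sum_congr rfl fun c _ => by ring
    rw [expand]
    refine (Finset.abs_sum_le_sum_abs _ _).trans ?_
    have hterm : ∀ c : Finset EPRVertex,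
        |q c * ((∑ x' : Fin 2, ∑ y' : Fin 2, corr x' y' (indicator c))
            - 2 * corr x y (indicator c))|
          ≤ q c * (2 + (disturbance c : ℝ)) := by
      intro c
      by_cases hqc : q c = 0
      · simp [hqc]
      · rw [abs_mul, abs_of_nonneg (hq0 c)]
        exact mul_le_mul_of_nonneg_left (det_bound c (hsupp c hqc) x y) (hq0 c)
    refine (Finset.sum_le_sum fun c _ => hterm c).trans ?_
    have : ∑ c : Finset EPRVertex, q c * (2 + (disturbance c : ℝ))
        = 2 * (∑ c : Finset EPRVertex, q c)
          + ∑ c : Finset EPRVertex, q c * (disturbance c : ℝ) := by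
      rw [Finset.mul_sum, ← Finset.sum_add_distrib]
      exact Finset.sum_congr rfl fun c _ => by ring
    rw [this, hq1]; ring_nf; rfl
  unfold Bell
  exact Finset.sup'_le _ _ fun xy _ => hL xy.1 xy.2
end

section
/- The sets c₀ = {(0,0,0,0),(0,1,0,1),(0,0,1,0),(1,1,1,1)} and c₁ = {(1,1,0,0),(1,0,0,1),(1,1,1,0),(0,0,1,1)} are deterministic models on the EPR scenario, each of which violates the no-disturbance (ND) condition, yet the probabilistic model p = (1/2)·1_{c₀} + (1/2)·1_{c₁} satisfies the ND condition. -/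
/-- The first deterministic model in the PR-box decomposition. -/
def c₀ : Finset EPRVertex := {(0,0,0,0), (0,1,0,1), (0,0,1,0), (1,1,1,1)}

/-- The second deterministic model in the PR-box decomposition. -/
def c₁ : Finset EPRVertex := {(1,1,0,0), (1,0,0,1), (1,1,1,0), (0,0,1,1)}

/-- `c₀` and `c₁` are deterministic models on the EPR scenario, each
violating the ND condition, yet `p = ½·1_{c₀} + ½·1_{c₁}` satisfies the ND condition. -/
theorem disturbing_det_models_average_to_nd :
    IsDetModel c₀ ∧ IsDetModel c₁ ∧
    ¬ IsND (indicator c₀) ∧ ¬ IsND (indicator c₁) ∧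
    IsND (fun v => (1 / 2) * indicator c₀ v + (1 / 2) * indicator c₁ v) := by
  refine ⟨?_, ?_, ?_, ?_, ?_⟩
  · unfold IsDetModel; decide
  · unfold IsDetModel; decide
  · intro h
    have := h.1 1 1
    simp [indicator, c₀, Fin.sum_univ_two, Prod.ext_iff] at this
  · intro h
    have := h.1 0 1
    simp [indicator, c₁, Fin.sum_univ_two, Prod.ext_iff] at this
  · constructor
    · intro a x
      fin_cases a <;> fin_cases x <;>
        simp [indicator, c₀, c₁, Fin.sum_univ_two, Prod.ext_iff]
    · intro b y
      fin_cases b <;> fin_cases y <;>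
        simp [indicator, c₀, c₁, Fin.sum_univ_two, Prod.ext_iff]
end

section
/- For the deterministic models c₀ = {(0,0,0,0),(0,1,0,1),(0,0,1,0),(1,1,1,1)} and c₁ = {(1,1,0,0),(1,0,0,1),(1,1,1,0),(0,0,1,1)} on the EPR scenario, the disturbances satisfy D(c₀) = 2 and D(c₁) = 2; consequently, for the Popescu–Rohrlich box p_PR = (1/2)·1_{c₀} + (1/2)·1_{c₁}, the Bell parameter minus the total weighted disturbance equals the classical bound: B(p_PR) − ((1/2)·D(c₀) + (1/2)·D(c₁)) = 2. -/
/-- The Popescu–Rohrlich box: `p(a,b,x,y) = 1/2` if `a + b = (1+x)·y (mod 2)`, else 0. -/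
noncomputable def pPR : EPRVertex → ℝ := fun v =>
  if v.1 + v.2.1 = (1 + v.2.2.1) * v.2.2.2 then 1 / 2 else 0


private lemma hcorr00 : corr 0 0 pPR = 1 := by simp [corr, pPR, Fin.sum_univ_two]; norm_num
private lemma hcorr01 : corr 0 1 pPR = -1 := by simp [corr, pPR, Fin.sum_univ_two]; norm_num
private lemma hcorr10 : corr 1 0 pPR = 1 := by simp [corr, pPR, Fin.sum_univ_two]; norm_num
private lemma hcorr11 : corr 1 1 pPR = 1 := by simp [corr, pPR, Fin.sum_univ_two]; norm_num

private lemma bell_pPR : Bell pPR = 4 := by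
  unfold Bell
  apply le_antisymm
  · apply Finset.sup'_le
    rintro ⟨x, y⟩ -
    fin_cases x <;> fin_cases y <;>
      simp [Fin.sum_univ_two, hcorr00, hcorr01, hcorr10, hcorr11] <;> norm_num
  · calc (4 : ℝ) = |(∑ x' : Fin 2, ∑ y' : Fin 2, corr x' y' pPR) - 2 * corr 0 1 pPR| := by
          simp [Fin.sum_univ_two, hcorr00, hcorr01, hcorr10, hcorr11]; norm_num
      _ ≤ _ := Finset.le_sup' (fun xy : Fin 2 × Fin 2 =>
          |(∑ x' : Fin 2, ∑ y' : Fin 2, corr x' y' pPR) - 2 * corr xy.1 xy.2 pPR|)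
          (Finset.mem_univ ((0 : Fin 2), (1 : Fin 2)))

private lemma dist0 : disturbance c₀ = 2 := by decide
private lemma dist1 : disturbance c₁ = 2 := by decide

/-- `D(c₀) = D(c₁) = 2`, and for the PR box
`B(p_PR) − (½·D(c₀) + ½·D(c₁)) = 2`, the classical bound. -/
theorem pr_box_bell_minus_weighted_disturbance_eq_two :
    disturbance c₀ = 2 ∧ disturbance c₁ = 2 ∧
    Bell pPR - ((1 / 2) * (disturbance c₀ : ℝ) + (1 / 2) * (disturbance c₁ : ℝ)) = 2 := by
  refine ⟨dist0, dist1, ?_⟩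
  rw [bell_pPR, dist0, dist1]
  norm_num
end
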